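/- Let λ*(n) be the symmetric Nash equilibrium precision of the homogeneous estimation game with n agents, and assume λ*(n) < 1/σ² and λ*(n+1) < 1/σ², so that λ*(m) satisfies λ*(m) = √(F'(1/(m λ*(m)))/(m² c'(λ*(m)))). Then the equilibrium estimation variance is non-increasing: 1/((n+1)λ*(n+1)) ≤ 1/(n λ*(n)). -/

import Mathlib

open Set

/-- in the homogeneous estimation game, if the equilibrium precisions
`λ*(n)` and `λ*(n+1)` are interior (so they satisfy the fixed-point characterization
`λ*(m) = √(F'(1/(mλ*(m)))/(m²c'(λ*(m))))`), the equilibrium estimation variance is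
non-increasing in the number of agents: `1/((n+1)λ*(n+1)) ≤ 1/(nλ*(n))`. -/
theorem equilibrium_variance_nonincreasing
    (σ2 : ℝ) (hσ2 : 0 < σ2) (c F : ℝ → ℝ)
    (hc_smooth : ContDiffOn ℝ 2 c (Icc 0 (1 / σ2)))
    (hc_nonneg : ∀ x ∈ Icc 0 (1 / σ2), 0 ≤ c x)
    (hc_mono : MonotoneOn c (Icc 0 (1 / σ2)))
    (hc_sconv : StrictConvexOn ℝ (Icc 0 (1 / σ2)) c)
    (hc0 : c 0 = 0) (hc'0 : deriv c 0 = 0)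
    (hF_smooth : ContDiffOn ℝ 2 F (Ioi 0))
    (hF_nonneg : ∀ x ∈ Ioi 0, 0 ≤ F x)
    (hF_mono : MonotoneOn F (Ioi 0))
    (hF_sconv : StrictConvexOn ℝ (Ioi 0) F)
    (n : ℕ) (hn : 1 ≤ n) (lamstar : ℕ → ℝ)
    -- interiority of the two equilibria
    (hpos : ∀ m : ℕ, m = n ∨ m = n + 1 → lamstar m ∈ Ioo 0 (1 / σ2))
    -- interior fixed-point characterization
    (hfix : ∀ m : ℕ, m = n ∨ m = n + 1 →
      lamstar m = Real.sqrt (deriv F (1 / ((m : ℝ) * lamstar m))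
        / ((m : ℝ) ^ 2 * deriv c (lamstar m))))
    -- previously known: the equilibrium precision is non-increasing
    (hanti : lamstar (n + 1) ≤ lamstar n) :
    1 / (((n : ℝ) + 1) * lamstar (n + 1)) ≤ 1 / ((n : ℝ) * lamstar n) := by
  have hFd : ∀ x ∈ Ioi (0:ℝ), DifferentiableAt ℝ F x := fun x hx =>
    ((hF_smooth.differentiableOn two_ne_zero).differentiableAt (isOpen_Ioi.mem_nhds hx))
  have hcd : ∀ x ∈ Ioo (0:ℝ) (1/σ2), DifferentiableAt ℝ c x := fun x hx =>
    ((hc_smooth.differentiableOn two_ne_zero).differentiableAt (Icc_mem_nhds hx.1 hx.2))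
  -- key: fixed point gives F'(v) = (mλ)² c'(λ) and c'(λ) > 0
  have key : ∀ m : ℕ, m = n ∨ m = n + 1 →
      0 < deriv c (lamstar m) ∧
      deriv F (1 / ((m : ℝ) * lamstar m))
        = ((m : ℝ) * lamstar m) ^ 2 * deriv c (lamstar m) := by
    intro m hm
    obtain ⟨hl0, hl1⟩ := hpos m hm
    have hm1 : 1 ≤ m := by rcases hm with rfl | rfl <;> omega
    have hmR : (0:ℝ) < (m:ℝ) := by exact_mod_cast Nat.pos_of_ne_zero (by omega)
    set v : ℝ := 1 / ((m : ℝ) * lamstar m) with hvdef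
    have hv : 0 < v := by rw [hvdef]; positivity
    have hq := hfix m hm
    have hqpos : 0 < deriv F v / ((m : ℝ) ^ 2 * deriv c (lamstar m)) := by
      rw [← Real.sqrt_pos, ← hq]; exact hl0
    have hsq : lamstar m ^ 2 = deriv F v / ((m : ℝ) ^ 2 * deriv c (lamstar m)) := by
      have h := Real.sq_sqrt hqpos.le
      rw [← hq] at h
      exact h
    have hdne : (m : ℝ) ^ 2 * deriv c (lamstar m) ≠ 0 := by
      intro h
      rw [h, div_zero] at hqpos
      exact lt_irrefl 0 hqpos
    have hFv : deriv F v = lamstar m ^ 2 * ((m : ℝ) ^ 2 * deriv c (lamstar m)) := by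
      field_simp at hsq
      have hc : deriv c (lamstar m) ≠ 0 := fun h => hdne (by rw [h, mul_zero])
      rw [eq_div_iff hc] at hsq
      linarith [hsq]
    -- F' at v is nonnegative since F is monotone
    have hF'nonneg : 0 ≤ deriv F v := by
      have hhalf : v / 2 ∈ Ioi (0:ℝ) := by simpa using half_pos hv
      have hslope := hF_sconv.convexOn.slope_le_deriv hhalf (mem_Ioi.mpr hv)
        (half_lt_self hv) (hFd v (mem_Ioi.mpr hv))
      have h0 : 0 ≤ slope F (v/2) v := by
        rw [slope_def_field]
        apply div_nonneg
        · have := hF_mono hhalf (mem_Ioi.mpr hv) (by linarith)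
          linarith
        · linarith
      linarith
    have hc'pos : 0 < deriv c (lamstar m) := by
      rcases lt_trichotomy (deriv c (lamstar m)) 0 with h | h | h
      · have h1 : 0 < lamstar m ^ 2 * (m:ℝ) ^ 2 := by positivity
        nlinarith [mul_neg_of_pos_of_neg h1 h]
      · exact absurd (by rw [h, mul_zero]) hdne
      · exact h
    exact ⟨hc'pos, by rw [hFv]; ring⟩
  obtain ⟨hb0, hb1⟩ := hpos n (Or.inl rfl)
  obtain ⟨ha0, ha1⟩ := hpos (n+1) (Or.inr rfl)
  obtain ⟨hcb, hFb⟩ := key n (Or.inl rfl)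
  obtain ⟨hca, hFa⟩ := key (n+1) (Or.inr rfl)
  push_cast at hFa
  have hnR : (1:ℝ) ≤ (n:ℝ) := by exact_mod_cast hn
  -- c'(λ(n+1)) ≤ c'(λ(n))
  have hcmono : deriv c (lamstar (n+1)) ≤ deriv c (lamstar n) := by
    rcases eq_or_lt_of_le hanti with heq | hlt
    · rw [heq]
    · have hia : lamstar (n+1) ∈ Icc (0:ℝ) (1/σ2) := ⟨ha0.le, ha1.le⟩
      have hib : lamstar n ∈ Icc (0:ℝ) (1/σ2) := ⟨hb0.le, hb1.le⟩
      exact (hc_sconv.convexOn.deriv_le_slope hia hib hlt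
          (hcd _ ⟨ha0, ha1⟩)).trans
        (hc_sconv.convexOn.slope_le_deriv hia hib hlt (hcd _ ⟨hb0, hb1⟩))
  by_contra hcon
  push_neg at hcon
  have hnb : 0 < (n:ℝ) * lamstar n := by nlinarith
  have hna : 0 < ((n:ℝ) + 1) * lamstar (n+1) := by nlinarith
  -- contradiction hypothesis means (n+1)λ(n+1) < nλ(n)
  have hprod : ((n:ℝ) + 1) * lamstar (n+1) < (n:ℝ) * lamstar n := by
    have h := hcon
    rw [div_lt_div_iff₀ hnb hna] at h
    linarith
  -- F' monotone on Ioi 0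
  have hvb : (0:ℝ) < 1 / ((n:ℝ) * lamstar n) := by positivity
  have hva : (0:ℝ) < 1 / (((n:ℝ) + 1) * lamstar (n+1)) := by positivity
  have hFmono : deriv F (1 / ((n:ℝ) * lamstar n))
      ≤ deriv F (1 / (((n:ℝ) + 1) * lamstar (n+1))) :=
    hF_sconv.convexOn.monotoneOn_deriv hFd (mem_Ioi.mpr hvb) (mem_Ioi.mpr hva) hcon.le
  rw [hFb, hFa] at hFmono
  have hsqlt : (((n:ℝ) + 1) * lamstar (n+1)) ^ 2 < ((n:ℝ) * lamstar n) ^ 2 := by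
    nlinarith
  nlinarith [mul_lt_mul_of_pos_right hsqlt hca,
    mul_le_mul_of_nonneg_left hcmono (sq_nonneg ((n:ℝ) * lamstar n))]
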